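/- Define ρ(M, n) = √2/(M·sin((π/(2M))·n)). For all integers M ≥ 4 and n with 3 ≤ n ≤ M−1: ρ(M, n) > ρ(M+1, n), ρ(M, n) > ρ(M, n+1) whenever n+1 ≤ M−1, and ρ(M, n) ≤ ρ(4, 3) = √2/(4·sin(3π/8)) < 2/5. -/

import Mathlib

open Real

/-- `ρ(M, n) = √2/(M·sin((π/(2M))·n))`. -/
noncomputable def rho (M n : ℕ) : ℝ :=
  Real.sqrt 2 / (M * Real.sin (Real.pi / (2 * M) * n))

lemma sin_mul_lt (a t : ℝ) (ha : 0 < a) (ha' : a ≤ π) (ht : 0 < t) (ht' : t < 1) :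
    t * Real.sin a < Real.sin (t * a) := by
  have h := strictConcaveOn_sin_Icc.2 (Set.mem_Icc.2 ⟨le_rfl, Real.pi_pos.le⟩)
    (Set.mem_Icc.2 ⟨ha.le, ha'⟩) (ne_of_lt ha)
    (show (0:ℝ) < 1 - t by linarith) ht (by ring)
  simpa using h

lemma arg_pos (M n : ℕ) (hM : 4 ≤ M) (hn : 1 ≤ n) :
    0 < Real.pi / (2 * M) * n := by
  have hMpos : (0:ℝ) < M := by positivity
  have : (0:ℝ) < n := by exact_mod_cast hn
  positivity

lemma arg_lt (M n : ℕ) (hM : 4 ≤ M) (hn' : n ≤ M - 1) :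
    Real.pi / (2 * M) * n < Real.pi / 2 := by
  have hMpos : (0:ℝ) < M := by positivity
  have hnM : (n:ℝ) < M := by
    have : n < M := lt_of_le_of_lt hn' (by omega)
    exact_mod_cast this
  rw [div_mul_eq_mul_div, div_lt_div_iff₀ (by positivity) (by norm_num)]
  have := Real.pi_pos
  nlinarith

lemma denom_pos (M n : ℕ) (hM : 4 ≤ M) (hn : 1 ≤ n) (hn' : n ≤ M - 1) :
    0 < (M:ℝ) * Real.sin (Real.pi / (2 * M) * n) := by
  have h1 := arg_pos M n hM hn
  have h2 := arg_lt M n hM hn'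
  have : 0 < Real.sin (Real.pi / (2 * M) * n) :=
    Real.sin_pos_of_pos_of_lt_pi h1 (lt_trans h2 (by linarith [Real.pi_pos]))
  have hMpos : (0:ℝ) < M := by positivity
  positivity

lemma step_M (M n : ℕ) (hM : 4 ≤ M) (hn : 1 ≤ n) (hn' : n ≤ M - 1) :
    rho M n > rho (M + 1) n := by
  have hMpos : (0:ℝ) < M := by positivity
  have hM1pos : (0:ℝ) < (M:ℝ) + 1 := by positivity
  set a : ℝ := Real.pi / (2 * M) * n with ha_def
  set t : ℝ := M / (M + 1) with ht_def
  have ha : 0 < a := arg_pos M n hM hn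
  have ha' : a ≤ π := le_trans (arg_lt M n hM hn').le (by linarith [Real.pi_pos])
  have ht : 0 < t := by positivity
  have ht' : t < 1 := by rw [div_lt_one hM1pos]; linarith
  have key := sin_mul_lt a t ha ha' ht ht'
  have hta : t * a = Real.pi / (2 * ((M:ℝ) + 1)) * n := by
    rw [ht_def, ha_def]
    field_simp
  have hlt : (M:ℝ) * Real.sin a < ((M:ℝ) + 1) * Real.sin (Real.pi / (2 * ((M:ℝ)+1)) * n) := by
    rw [← hta]
    have := mul_lt_mul_of_pos_left key hM1pos
    calc (M:ℝ) * Real.sin a = ((M:ℝ)+1) * (t * Real.sin a) := by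
          rw [ht_def]
          field_simp
      _ < ((M:ℝ)+1) * Real.sin (t * a) := this
  have hd1 := denom_pos M n hM hn hn'
  unfold rho
  push_cast
  apply div_lt_div_of_pos_left (by positivity) hd1 hlt

lemma step_n (M n : ℕ) (hM : 4 ≤ M) (hn : 1 ≤ n) (hn' : n + 1 ≤ M - 1) :
    rho M n > rho M (n + 1) := by
  have hd1 := denom_pos M n hM hn (by omega)
  have h1 := arg_pos M n hM hn
  have h2 := arg_lt M (n+1) hM hn'
  have hMpos : (0:ℝ) < M := by positivity
  push_cast at h2
  have hxy : Real.pi / (2 * M) * (n:ℝ) < Real.pi / (2 * M) * ((n:ℝ) + 1) := by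
    apply mul_lt_mul_of_pos_left (by linarith) (by positivity)
  have hsin : Real.sin (Real.pi / (2 * M) * n) < Real.sin (Real.pi / (2 * M) * ((n:ℝ) + 1)) := by
    apply Real.strictMonoOn_sin
    · exact Set.mem_Icc.2 ⟨by linarith [Real.pi_pos], by linarith⟩
    · exact Set.mem_Icc.2 ⟨by linarith [Real.pi_pos], h2.le⟩
    · exact hxy
  have hlt : (M:ℝ) * Real.sin (Real.pi / (2 * M) * n)
      < (M:ℝ) * Real.sin (Real.pi / (2 * M) * ((n:ℝ) + 1)) :=
    mul_lt_mul_of_pos_left hsin hMpos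
  unfold rho
  push_cast
  push_cast at hd1 hlt
  apply div_lt_div_of_pos_left (by positivity) hd1 hlt

lemma rho_le_n (M n : ℕ) (hM : 4 ≤ M) (hn : 3 ≤ n) (hn' : n ≤ M - 1) :
    rho M n ≤ rho M 3 := by
  induction n with
  | zero => omega
  | succ k ih =>
    rcases Nat.lt_or_ge k 3 with hk | hk
    · interval_cases k <;> simp_all
    · have := step_n M k hM (by omega) (by omega)
      have := ih (by omega) (by omega)
      linarith

lemma rho_le_M (M : ℕ) (hM : 4 ≤ M) : rho M 3 ≤ rho 4 3 := by
  induction M, hM using Nat.le_induction with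
  | base => exact le_refl _
  | succ k hk ih =>
    have := step_M k 3 (by omega) (by omega) (by omega)
    linarith

/-- Equations (35)–(36) of Appendix D: monotonicity in `M` and in `n` of
`ρ(M,n)`, and the bound `ρ(M,n) ≤ ρ(4,3) = √2/(4·sin(3π/8)) < 2/5`. -/
theorem rho_monotone_bounds (M n : ℕ) (hM : 4 ≤ M) (hn : 3 ≤ n) (hn' : n ≤ M - 1) :
    rho M n > rho (M + 1) n ∧
    (n + 1 ≤ M - 1 → rho M n > rho M (n + 1)) ∧
    rho M n ≤ rho 4 3 ∧
    rho 4 3 = Real.sqrt 2 / (4 * Real.sin (3 * Real.pi / 8)) ∧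
    rho 4 3 < 2 / 5 := by
  have heq : rho 4 3 = Real.sqrt 2 / (4 * Real.sin (3 * Real.pi / 8)) := by
    unfold rho
    norm_num
    ring_nf
  refine ⟨step_M M n hM (by omega) hn', fun h => step_n M n hM (by omega) h,
    le_trans (rho_le_n M n hM hn hn') (rho_le_M M hM), heq, ?_⟩
  rw [heq]
  have h38 : Real.sin (3 * Real.pi / 8) = Real.cos (Real.pi / 8) := by
    rw [show 3 * Real.pi / 8 = Real.pi / 2 - Real.pi / 8 by ring, Real.sin_pi_div_two_sub]
  rw [h38, Real.cos_pi_div_eight]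
  set s := Real.sqrt 2 with hs_def
  set u := Real.sqrt (2 + Real.sqrt 2) with hu_def
  have hs2 : s ^ 2 = 2 := Real.sq_sqrt (by norm_num)
  have hs0 : 0 ≤ s := Real.sqrt_nonneg _
  have hu2 : u ^ 2 = 2 + s := Real.sq_sqrt (by positivity)
  have hu0 : 0 < u := Real.sqrt_pos.2 (by positivity)
  have hs98 : 9/8 < s := by nlinarith
  have key : 5 * s < 4 * u := by
    have hsq : (5 * s) ^ 2 < (4 * u) ^ 2 := by nlinarith
    exact lt_of_pow_lt_pow_left₀ 2 (by positivity) hsq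
  rw [div_lt_div_iff₀ (by positivity) (by norm_num)]
  nlinarith
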